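/- With the global cost C_LET = 1 - (1/N)∑_k |⟨Ψ_k| V† U |Ψ_k⟩|², we have C_LET = 0 if and only if U|ψ⟩ = e^{iφ} V|ψ⟩ for some common phase φ and all |ψ⟩ in span{|Ψ_k⟩}, assuming the |Ψ_k⟩ are linearly independent, pairwise nonorthogonal unit vectors. -/

import Mathlib

open scoped InnerProductSpace

/-- The global Loschmidt-echo cost `C_LET = 1 - (1/N)∑_k |⟨Ψ_k|V†U|Ψ_k⟩|²`
vanishes iff `U` and `V` agree on the span of the `Ψ_k` up to a common phase,
for linearly independent, pairwise nonorthogonal unit vectors. -/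
theorem cost_LET_faithful
    {E : Type*} [NormedAddCommGroup E] [InnerProductSpace ℂ E] [FiniteDimensional ℂ E]
    (N : ℕ) (hN : 0 < N) (Ψ : Fin N → E)
    (hunit : ∀ k, ‖Ψ k‖ = 1)
    (hli : LinearIndependent ℂ Ψ)
    (hno : ∀ k k', ⟪Ψ k, Ψ k'⟫_ℂ ≠ 0)
    (U V : E ≃ₗᵢ[ℂ] E) :
    1 - (1 / (N : ℝ)) * ∑ k : Fin N, ‖⟪Ψ k, V.symm (U (Ψ k))⟫_ℂ‖ ^ 2 = 0 ↔
      ∃ φ : ℝ, ∀ ψ ∈ Submodule.span ℂ (Set.range Ψ),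
        U ψ = Complex.exp (Complex.I * φ) • V ψ := by
  have hN' : (N : ℝ) ≠ 0 := Nat.cast_ne_zero.mpr hN.ne'
  set W : E ≃ₗᵢ[ℂ] E := U.trans V.symm with hWdef
  have hWapp : ∀ x, W x = V.symm (U x) := fun x => rfl
  have hΨne : ∀ k, Ψ k ≠ 0 := by
    intro k h
    have := hunit k
    rw [h, norm_zero] at this
    norm_num at this
  constructor
  · intro h
    have hsum : ∑ k : Fin N, ‖⟪Ψ k, W (Ψ k)⟫_ℂ‖ ^ 2 = (N : ℝ) := by
      have h1 : (1 / (N : ℝ)) * ∑ k : Fin N,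
          ‖⟪Ψ k, V.symm (U (Ψ k))⟫_ℂ‖ ^ 2 = 1 := by linarith
      have := congrArg (fun x => (N : ℝ) * x) h1
      field_simp at this
      simpa [hWapp] using this
    have hle : ∀ k : Fin N, ‖⟪Ψ k, W (Ψ k)⟫_ℂ‖ ^ 2 ≤ 1 := by
      intro k
      have h2 : ‖⟪Ψ k, W (Ψ k)⟫_ℂ‖ ≤ ‖Ψ k‖ * ‖W (Ψ k)‖ := norm_inner_le_norm _ _
      rw [W.norm_map, hunit k] at h2
      have h3 : ‖⟪Ψ k, W (Ψ k)⟫_ℂ‖ ≤ 1 := by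
        simpa using h2
      nlinarith [norm_nonneg ⟪Ψ k, W (Ψ k)⟫_ℂ]
    have heach : ∀ k : Fin N, ‖⟪Ψ k, W (Ψ k)⟫_ℂ‖ ^ 2 = 1 := by
      have hsum1 : ∑ k : Fin N, ‖⟪Ψ k, W (Ψ k)⟫_ℂ‖ ^ 2
          = ∑ _k : Fin N, (1 : ℝ) := by simp [hsum]
      intro k
      exact (Finset.sum_eq_sum_iff_of_le (fun i _ => hle i)).mp hsum1 k (Finset.mem_univ k)
    -- each inner product has modulus 1, so W Ψ k = c k • Ψ k
    have hcex : ∀ k : Fin N, ∃ c : ℂ, c ≠ 0 ∧ W (Ψ k) = c • Ψ k := by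
      intro k
      have habs : ‖⟪Ψ k, W (Ψ k)⟫_ℂ‖ = 1 := by
        have := heach k
        nlinarith [norm_nonneg ⟪Ψ k, W (Ψ k)⟫_ℂ]
      have hnorm : ‖⟪Ψ k, W (Ψ k)⟫_ℂ‖ = ‖Ψ k‖ * ‖W (Ψ k)‖ := by
        rw [W.norm_map, hunit k, habs]; ring
      have hWne : W (Ψ k) ≠ 0 := by
        intro h0
        have := W.norm_map (Ψ k)
        rw [h0, norm_zero, hunit k] at this
        norm_num at this
      exact (norm_inner_eq_norm_iff (hΨne k) hWne).mp hnorm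
    choose c hc0 hcW using hcex
    -- |c k| = 1
    have habsc : ∀ k, ‖c k‖ = 1 := by
      intro k
      have := W.norm_map (Ψ k)
      rw [hcW k, norm_smul, hunit k] at this
      simpa using this
    -- all c k equal
    have hceq : ∀ k k', c k = c k' := by
      intro k k'
      have hinner : ⟪W (Ψ k), W (Ψ k')⟫_ℂ = ⟪Ψ k, Ψ k'⟫_ℂ := W.inner_map_map _ _
      rw [hcW k, hcW k', inner_smul_left, inner_smul_right] at hinner
      have hmul : (starRingEnd ℂ) (c k) * c k' = 1 := by
        have := hinner
        have h4 : ((starRingEnd ℂ) (c k) * c k') * ⟪Ψ k, Ψ k'⟫_ℂ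
            = 1 * ⟪Ψ k, Ψ k'⟫_ℂ := by rw [one_mul]; linear_combination this
        exact mul_right_cancel₀ (hno k k') h4
      have hck : (starRingEnd ℂ) (c k) * c k = 1 := by
        have := Complex.normSq_eq_norm_sq (c k)
        have h5 : Complex.normSq (c k) = 1 := by rw [this, habsc k]; norm_num
        have := Complex.mul_conj (c k)
        rw [h5] at this
        rw [mul_comm] at this
        simpa using this
      have hconjne : (starRingEnd ℂ) (c k) ≠ 0 := by
        simpa using hc0 k
      have := hmul.trans hck.symm
      exact (mul_left_cancel₀ hconjne this).symm
    set c0 : ℂ := c ⟨0, hN⟩ with hc0def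
    refine ⟨c0.arg, ?_⟩
    have hexp : Complex.exp (Complex.I * c0.arg) = c0 := by
      have := Complex.norm_mul_exp_arg_mul_I c0
      rw [habsc ⟨0, hN⟩] at this
      rw [mul_comm]
      simpa using this
    have hWspan : ∀ ψ ∈ Submodule.span ℂ (Set.range Ψ), W ψ = c0 • ψ := by
      intro ψ hψ
      induction hψ using Submodule.span_induction with
      | mem x hx =>
        obtain ⟨k, rfl⟩ := hx
        rw [hcW k, hceq k ⟨0, hN⟩]
      | zero => simp
      | add x y _ _ hx hy => rw [map_add, hx, hy, smul_add]
      | smul a x _ hx => rw [map_smul, hx, smul_comm]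
    intro ψ hψ
    have := hWspan ψ hψ
    rw [hWapp] at this
    have := congrArg V this
    rw [V.apply_symm_apply, map_smul] at this
    rw [this, hexp]
  · rintro ⟨φ, hφ⟩
    have hterm : ∀ k : Fin N, ‖⟪Ψ k, V.symm (U (Ψ k))⟫_ℂ‖ ^ 2 = 1 := by
      intro k
      have hmem : Ψ k ∈ Submodule.span ℂ (Set.range Ψ) :=
        Submodule.subset_span ⟨k, rfl⟩
      have hU := hφ (Ψ k) hmem
      have : V.symm (U (Ψ k)) = Complex.exp (Complex.I * φ) • Ψ k := by
        rw [hU, map_smul, V.symm_apply_apply]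
      rw [this, inner_smul_right]
      have hself : ⟪Ψ k, Ψ k⟫_ℂ = 1 := by
        rw [inner_self_eq_norm_sq_to_K, hunit k]; norm_num
      rw [hself, mul_one, Complex.norm_exp]
      simp [Complex.mul_re]
    have : ∑ k : Fin N, ‖⟪Ψ k, V.symm (U (Ψ k))⟫_ℂ‖ ^ 2 = (N : ℝ) := by
      simp [hterm]
    rw [this]
    field_simp
    norm_num
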